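/- arXiv:1502.06095 — 6 statements merged into one kernel-verified Lean document; each statement's English description precedes it below -/
import Mathlib

section
/- Let T be a monad and B a functor on a category C, and let λ : TB ⇒ BT be a distributive law of the monad T over the functor B (i.e., λ is compatible with the unit and multiplication of T). Given a coalgebra p : X → BTX, define p* : TX → BTX as the composite B(μ_X) ∘ λ_{TX} ∘ T(p). Then (TX, μ_X, p*) is a λ-bialgebra, i.e., the diagram p* ∘ μ_X = B(μ_X) ∘ λ_{TX} ∘ T(p*) commutes. -/
open CategoryTheory

universe v u

/-- If `λ : TB ⇒ BT` is a distributive law of the monad `T` over the functor `B`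
and `p : X ⟶ BTX` is a coalgebra, then `(TX, μ_X, p*)` with
`p* = B(μ_X) ∘ λ_{TX} ∘ T(p)` is a `λ`-bialgebra. -/
theorem stmt2 {C : Type u} [Category.{v} C]
    (T : CategoryTheory.Monad C) (B : C ⥤ C)
    (lam : B ⋙ T.toFunctor ⟶ T.toFunctor ⋙ B)
    (h_unit : ∀ Y : C, T.η.app (B.obj Y) ≫ lam.app Y = B.map (T.η.app Y))
    (h_mult : ∀ Y : C, T.μ.app (B.obj Y) ≫ lam.app Y =
      T.toFunctor.map (lam.app Y) ≫ lam.app (T.toFunctor.obj Y) ≫ B.map (T.μ.app Y))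
    (X : C) (p : X ⟶ B.obj (T.toFunctor.obj X)) :
    T.μ.app X ≫ (T.toFunctor.map p ≫ lam.app (T.toFunctor.obj X) ≫ B.map (T.μ.app X)) =
      T.toFunctor.map (T.toFunctor.map p ≫ lam.app (T.toFunctor.obj X) ≫ B.map (T.μ.app X)) ≫
        lam.app (T.toFunctor.obj X) ≫ B.map (T.μ.app X) := by
  have hnatμ : T.μ.app X ≫ T.toFunctor.map p =
      T.toFunctor.map (T.toFunctor.map p) ≫ T.μ.app (B.obj (T.toFunctor.obj X)) :=
    (T.μ.naturality p).symm
  have hnatlam : T.toFunctor.map (B.map (T.μ.app X)) ≫ lam.app (T.toFunctor.obj X) =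
      lam.app (T.toFunctor.obj (T.toFunctor.obj X)) ≫ B.map (T.toFunctor.map (T.μ.app X)) :=
    lam.naturality (T.μ.app X)
  have hassoc : T.toFunctor.map (T.μ.app X) ≫ T.μ.app X =
      T.μ.app (T.toFunctor.obj X) ≫ T.μ.app X := T.assoc X
  calc T.μ.app X ≫ (T.toFunctor.map p ≫ lam.app (T.toFunctor.obj X) ≫ B.map (T.μ.app X))
      = (T.μ.app X ≫ T.toFunctor.map p) ≫ lam.app (T.toFunctor.obj X) ≫ B.map (T.μ.app X) := by
        simp
    _ = T.toFunctor.map (T.toFunctor.map p) ≫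
          (T.μ.app (B.obj (T.toFunctor.obj X)) ≫ lam.app (T.toFunctor.obj X)) ≫
          B.map (T.μ.app X) := by rw [hnatμ]; simp
    _ = T.toFunctor.map (T.toFunctor.map p) ≫ T.toFunctor.map (lam.app (T.toFunctor.obj X)) ≫
          lam.app (T.toFunctor.obj (T.toFunctor.obj X)) ≫
          B.map (T.μ.app (T.toFunctor.obj X)) ≫ B.map (T.μ.app X) := by
        rw [h_mult]; simp
    _ = T.toFunctor.map (T.toFunctor.map p) ≫ T.toFunctor.map (lam.app (T.toFunctor.obj X)) ≫
          lam.app (T.toFunctor.obj (T.toFunctor.obj X)) ≫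
          B.map (T.toFunctor.map (T.μ.app X)) ≫ B.map (T.μ.app X) := by
        rw [← B.map_comp, ← B.map_comp, hassoc]
    _ = T.toFunctor.map (T.toFunctor.map p) ≫ T.toFunctor.map (lam.app (T.toFunctor.obj X)) ≫
          T.toFunctor.map (B.map (T.μ.app X)) ≫ lam.app (T.toFunctor.obj X) ≫
          B.map (T.μ.app X) := by rw [reassoc_of% hnatlam]
    _ = T.toFunctor.map (T.toFunctor.map p ≫ lam.app (T.toFunctor.obj X) ≫ B.map (T.μ.app X)) ≫
          lam.app (T.toFunctor.obj X) ≫ B.map (T.μ.app X) := by simp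
end

section
/- Let λ : FB ⇒ BF be a distributive law between endofunctors F, B on a category C, and suppose a final B-coalgebra c : X → BX exists. Let h' : FX → X be the unique B-coalgebra morphism from the B-coalgebra λ_X ∘ F(c) : FX → BFX to the final coalgebra (X, c). Then (X, h', c) is the final λ-bialgebra: for every λ-bialgebra (Y, k, q) there is a unique morphism f : Y → X that is simultaneously an F-algebra morphism and a B-coalgebra morphism. -/
open CategoryTheory

universe v u

/-- If `λ : FB ⇒ BF` is a distributive law between endofunctors and a final
`B`-coalgebra `(X, c)` exists, then `X`, equipped with the algebra `h'` induced by finality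
from the coalgebra `λ_X ∘ F(c)`, is the final `λ`-bialgebra. -/
theorem stmt3 {C : Type u} [Category.{v} C]
    (F B : C ⥤ C) (lam : B ⋙ F ⟶ F ⋙ B)
    (X : C) (c : X ⟶ B.obj X)
    (hfinal : ∀ (Y : C) (q : Y ⟶ B.obj Y), ∃! f : Y ⟶ X, f ≫ c = q ≫ B.map f)
    (h' : F.obj X ⟶ X)
    (hh' : h' ≫ c = (F.map c ≫ lam.app X) ≫ B.map h') :
    ∀ (Y : C) (k : F.obj Y ⟶ Y) (q : Y ⟶ B.obj Y),
      k ≫ q = F.map q ≫ lam.app Y ≫ B.map k →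
      ∃! f : Y ⟶ X, k ≫ f = F.map f ≫ h' ∧ f ≫ c = q ≫ B.map f := by
  intro Y k q hbi
  obtain ⟨f, hf, huniq⟩ := hfinal Y q
  refine ⟨f, ⟨?_, hf⟩, fun g hg => huniq g hg.2⟩
  -- both sides are coalgebra morphisms from (F Y, F q ≫ lam_Y) to (X, c)
  obtain ⟨m, _, muniq⟩ := hfinal (F.obj Y) (F.map q ≫ lam.app Y)
  have h1 : (k ≫ f) ≫ c = (F.map q ≫ lam.app Y) ≫ B.map (k ≫ f) := by
    rw [Category.assoc, hf, ← Category.assoc, hbi]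
    simp [B.map_comp]
  have h2 : (F.map f ≫ h') ≫ c = (F.map q ≫ lam.app Y) ≫ B.map (F.map f ≫ h') := by
    have nat : F.map (B.map f) ≫ lam.app X = lam.app Y ≫ B.map (F.map f) :=
      lam.naturality f
    rw [Category.assoc, hh']
    rw [show F.map f ≫ (F.map c ≫ lam.app X) ≫ B.map h'
        = F.map (f ≫ c) ≫ lam.app X ≫ B.map h' by simp]
    rw [hf]
    simp only [F.map_comp, B.map_comp, Category.assoc]
    rw [← Category.assoc (F.map (B.map f)), nat]
    simp
  rw [muniq (k ≫ f) h1, muniq (F.map f ≫ h') h2]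
end

section
/- The family of maps λ_X : List(P_f(X)) → P_f(List(X)) sending [S_1, …, S_n] to the set { [x_1, …, x_n] | x_i ∈ S_i for each i } is a distributive law of the list monad L over the finite powerset monad P_f on Set: it is natural in X and compatible with the units and multiplications of both monads. -/
universe u

private lemma aux_app {α β : Type*} {R : α → β → Prop} (a b : List β) (l : List α) :
    List.Forall₂ R l (a ++ b) ↔
      ∃ l1 l2, List.Forall₂ R l1 a ∧ List.Forall₂ R l2 b ∧ l = l1 ++ l2 := by
  induction a generalizing l with
  | nil =>
    simp only [List.nil_append, List.forall₂_nil_right_iff]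
    constructor
    · intro h; exact ⟨[], l, rfl, h, rfl⟩
    · rintro ⟨l1, l2, rfl, h2, rfl⟩; simpa using h2
  | cons x a ih =>
    cases l with
    | nil =>
      constructor
      · intro h; cases h
      · rintro ⟨l1, l2, h1, h2, h3⟩
        cases h1 with
        | cons _ _ => simp at h3
    | cons y l =>
      simp only [List.cons_append, List.forall₂_cons, ih]
      constructor
      · rintro ⟨hy, l1, l2, h1, h2, rfl⟩
        exact ⟨y :: l1, l2, List.Forall₂.cons hy h1, h2, rfl⟩
      · rintro ⟨l1, l2, h1, h2, h3⟩
        cases h1 with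
        | cons hy h1 =>
          simp only [List.cons_append, List.cons.injEq] at h3
          obtain ⟨rfl, rfl⟩ := h3
          exact ⟨hy, _, _, h1, h2, rfl⟩

private lemma aux_nat {X Y : Type u} [DecidableEq Y] (f : X → Y) (Ss : List (Finset X))
    (l : List Y) :
    List.Forall₂ (fun y S => y ∈ S) l (Ss.map (Finset.image f)) ↔
      ∃ l', List.Forall₂ (fun x S => x ∈ S) l' Ss ∧ List.map f l' = l := by
  induction Ss generalizing l with
  | nil =>
    simp only [List.map_nil, List.forall₂_nil_right_iff]
    constructor
    · rintro rfl; exact ⟨[], rfl, rfl⟩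
    · rintro ⟨l', rfl, rfl⟩; rfl
  | cons S Ss ih =>
    cases l with
    | nil =>
      simp only [List.map_cons]
      constructor
      · intro h; cases h
      · rintro ⟨l', h, h2⟩
        cases h with
        | cons _ _ => simp at h2
    | cons y l =>
      simp only [List.map_cons, List.forall₂_cons, ih, Finset.mem_image]
      constructor
      · rintro ⟨⟨x, hx, rfl⟩, l', h, rfl⟩
        exact ⟨x :: l', List.Forall₂.cons hx h, rfl⟩
      · rintro ⟨l', h, h3⟩
        cases h with
        | cons hx h =>
          simp only [List.map_cons, List.cons.injEq] at h3
          obtain ⟨rfl, rfl⟩ := h3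
          exact ⟨⟨_, hx, rfl⟩, _, h, rfl⟩

private lemma aux_flat {X : Type u} (ll : List (List (Finset X))) (l : List X) :
    List.Forall₂ (fun x S => x ∈ S) l ll.flatten ↔
      ∃ ls : List (List X),
        List.Forall₂ (fun li Ssi => List.Forall₂ (fun x S => x ∈ S) li Ssi) ls ll ∧
        ls.flatten = l := by
  induction ll generalizing l with
  | nil =>
    simp only [List.flatten_nil, List.forall₂_nil_right_iff]
    constructor
    · rintro rfl; exact ⟨[], rfl, rfl⟩
    · rintro ⟨ls, rfl, rfl⟩; rfl
  | cons Ss ll ih =>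
    simp only [List.flatten_cons, aux_app, ih]
    constructor
    · rintro ⟨l1, l2, h1, ⟨ls, h2, rfl⟩, rfl⟩
      exact ⟨l1 :: ls, List.Forall₂.cons h1 h2, rfl⟩
    · rintro ⟨ls, h, rfl⟩
      cases h with
      | cons h1 h2 => exact ⟨_, _, h1, ⟨_, h2, rfl⟩, rfl⟩

private lemma aux_single {X : Type u} (l l0 : List X) :
    List.Forall₂ (fun x S => x ∈ S) l (l0.map (fun x => ({x} : Finset X))) ↔ l = l0 := by
  induction l0 generalizing l with
  | nil => simp [List.forall₂_nil_right_iff]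
  | cons x l0 ih =>
    cases l with
    | nil =>
      simp only [List.map_cons]
      constructor
      · intro h; cases h
      · intro h; simp at h
    | cons y l =>
      simp [List.forall₂_cons, ih]

private lemma aux_union {X : Type u} [DecidableEq X] (Sss : List (Finset (Finset X)))
    (l : List X) :
    List.Forall₂ (fun x T => x ∈ Finset.biUnion T id) l Sss ↔
      ∃ Ss : List (Finset X), List.Forall₂ (fun S T => S ∈ T) Ss Sss ∧
        List.Forall₂ (fun x S => x ∈ S) l Ss := by
  induction Sss generalizing l with
  | nil =>
    simp only [List.forall₂_nil_right_iff]
    constructor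
    · rintro rfl; exact ⟨[], rfl, List.Forall₂.nil⟩
    · rintro ⟨Ss, rfl, h2⟩; cases h2; rfl
  | cons T Sss ih =>
    cases l with
    | nil =>
      constructor
      · intro h; cases h
      · rintro ⟨Ss, h1, h2⟩; cases h2; cases h1
    | cons x l =>
      rw [List.forall₂_cons, ih]
      constructor
      · rintro ⟨hxT, Ss, h1, h2⟩
        rw [Finset.mem_biUnion] at hxT
        obtain ⟨S, hS, hx⟩ := hxT
        exact ⟨S :: Ss, List.Forall₂.cons hS h1, List.Forall₂.cons (by simpa using hx) h2⟩
      · rintro ⟨Ss, h1, h2⟩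
        cases h1 with
        | cons hS h1 =>
          cases h2 with
          | cons hx h2 =>
            exact ⟨Finset.mem_biUnion.2 ⟨_, hS, by simpa using hx⟩, _, h1, h2⟩

/-- the family `λ_X : List (P_f X) → P_f (List X)` sending `[S₁, …, Sₙ]` to
`{ [x₁, …, xₙ] | xᵢ ∈ Sᵢ }` is a distributive law of the list monad over the finite powerset
monad: it is natural and compatible with the units and multiplications of both monads. -/
theorem stmt4
    (lam : ∀ (X : Type u) [DecidableEq X], List (Finset X) → Finset (List X))
    (hlam : ∀ (X : Type u) [DecidableEq X] (Ss : List (Finset X)) (l : List X),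
      l ∈ lam X Ss ↔ List.Forall₂ (fun x S => x ∈ S) l Ss) :
    -- naturality
    (∀ (X Y : Type u) [DecidableEq X] [DecidableEq Y] (f : X → Y) (Ss : List (Finset X)),
      lam Y (Ss.map (Finset.image f)) = (lam X Ss).image (List.map f)) ∧
    -- compatibility with the unit of the list monad
    (∀ (X : Type u) [DecidableEq X] (S : Finset X),
      lam X [S] = S.image (fun x => [x])) ∧
    -- compatibility with the multiplication (flattening) of the list monad
    (∀ (X : Type u) [DecidableEq X] (ll : List (List (Finset X))),
      lam X ll.flatten = (lam (List X) (ll.map (lam X))).image List.flatten) ∧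
    -- compatibility with the unit of the finite powerset monad
    (∀ (X : Type u) [DecidableEq X] (l : List X),
      lam X (l.map (fun x => ({x} : Finset X))) = {l}) ∧
    -- compatibility with the multiplication (union) of the finite powerset monad
    (∀ (X : Type u) [DecidableEq X] (Sss : List (Finset (Finset X))),
      lam X (Sss.map (fun T => T.biUnion id)) =
        ((lam (Finset X) Sss).image (lam X)).biUnion id) := by
  refine ⟨?_, ?_, ?_, ?_, ?_⟩
  · intro X Y _ _ f Ss
    ext l
    simp only [hlam, aux_nat, Finset.mem_image]
  · intro X _ S
    ext l
    simp only [hlam, List.forall₂_cons_right_iff, List.forall₂_nil_right_iff,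
      Finset.mem_image]
    constructor
    · rintro ⟨x, l', hx, rfl, rfl⟩
      exact ⟨x, hx, rfl⟩
    · rintro ⟨x, hx, rfl⟩; exact ⟨x, [], hx, rfl, rfl⟩
  · intro X _ ll
    ext l
    simp only [hlam, aux_flat, Finset.mem_image, List.forall₂_map_right_iff]
  · intro X _ l
    ext l'
    simp [hlam, aux_single]
  · intro X _ Sss
    ext l
    rw [hlam, List.forall₂_map_right_iff]
    rw [show (fun (x : X) (T : Finset (Finset X)) => x ∈ (fun T => T.biUnion id) T) =
      (fun x T => x ∈ Finset.biUnion T id) from rfl, aux_union]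
    simp only [Finset.mem_biUnion, Finset.mem_image, id]
    constructor
    · rintro ⟨Ss, h1, h2⟩
      exact ⟨lam X Ss, ⟨Ss, (hlam _ _ _).2 h1, rfl⟩, (hlam _ _ _).2 h2⟩
    · rintro ⟨A, ⟨Ss, h1, rfl⟩, h2⟩
      exact ⟨Ss, (hlam _ _ _).1 h1, (hlam _ _ _).1 h2⟩
end

section
/- Let U : C → D and K : D → C be functors with U left adjoint to K. Let T' : C → C and T'' : D → D be monads such that U ∘ T' = T'' ∘ U (including compatibility of units and multiplications, i.e., the adjunction's left adjoint lifts the monad). Then the family λ_X := ((T''((id_{KUX})^♭))^♯ : T'(KU X) → KU(T' X), where (·)^♭ : C[X, KZ] → D[UX, Z] and (·)^♯ : D[UX, Z] → C[X, KZ] are the bijections of the adjunction, is a distributive law of the monad T' over the monad KU (the monad induced by the adjunction). -/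
open CategoryTheory

universe v₁ v₂ u₁ u₂

/-- if `U ⊣ K` and the monad `T'` on `C` is lifted by `U` to a monad `T''` on `D`
(i.e. `U ∘ T' = T'' ∘ U`, compatibly with units and multiplications), then the family
`λ_X = ((T''((id_{KUX})^♭))^♯ : T'(KUX) ⟶ KU(T'X)` is a distributive law of the monad `T'`
over the monad `KU` induced by the adjunction. -/
theorem stmt6 {C : Type u₁} [Category.{v₁} C] {D : Type u₂} [Category.{v₂} D]
    (U : C ⥤ D) (K : D ⥤ C) (adj : U ⊣ K)
    (T' : CategoryTheory.Monad C) (T'' : CategoryTheory.Monad D)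
    (hfun : T'.toFunctor ⋙ U = U ⋙ T''.toFunctor)
    (hobj : ∀ X : C, U.obj (T'.toFunctor.obj X) = T''.toFunctor.obj (U.obj X))
    (hη : ∀ X : C, U.map (T'.η.app X) = T''.η.app (U.obj X) ≫ eqToHom (hobj X).symm)
    (hμ : ∀ X : C, U.map (T'.μ.app X) =
      eqToHom ((hobj (T'.toFunctor.obj X)).trans (congrArg T''.toFunctor.obj (hobj X))) ≫
        T''.μ.app (U.obj X) ≫ eqToHom (hobj X).symm) :
    let lam : ∀ X : C, T'.toFunctor.obj (K.obj (U.obj X)) ⟶ K.obj (U.obj (T'.toFunctor.obj X)) :=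
      fun X => (adj.homEquiv (T'.toFunctor.obj (K.obj (U.obj X))) (U.obj (T'.toFunctor.obj X)))
        (eqToHom (hobj (K.obj (U.obj X))) ≫
          T''.toFunctor.map ((adj.homEquiv (K.obj (U.obj X)) (U.obj X)).symm
            (𝟙 (K.obj (U.obj X)))) ≫ eqToHom (hobj X).symm)
    -- λ is natural
    (∀ (X Y : C) (f : X ⟶ Y),
      T'.toFunctor.map (K.map (U.map f)) ≫ lam Y = lam X ≫ K.map (U.map (T'.toFunctor.map f))) ∧
    -- λ is compatible with the unit of the monad KU
    (∀ X : C, T'.toFunctor.map (adj.unit.app X) ≫ lam X = adj.unit.app (T'.toFunctor.obj X)) ∧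
    -- λ is compatible with the multiplication of the monad KU
    (∀ X : C, T'.toFunctor.map (K.map (adj.counit.app (U.obj X))) ≫ lam X =
      lam (K.obj (U.obj X)) ≫ K.map (U.map (lam X)) ≫
        K.map (adj.counit.app (U.obj (T'.toFunctor.obj X)))) ∧
    -- λ is compatible with the unit of the monad T'
    (∀ X : C, T'.η.app (K.obj (U.obj X)) ≫ lam X = K.map (U.map (T'.η.app X))) ∧
    -- λ is compatible with the multiplication of the monad T'
    (∀ X : C, T'.μ.app (K.obj (U.obj X)) ≫ lam X =
      T'.toFunctor.map (lam X) ≫ lam (T'.toFunctor.obj X) ≫ K.map (U.map (T'.μ.app X))) := by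
  intro lam
  have hU : ∀ {X Y : C} (f : X ⟶ Y), U.map (T'.toFunctor.map f) =
      eqToHom (hobj X) ≫ T''.toFunctor.map (U.map f) ≫ eqToHom (hobj Y).symm := by
    intro X Y f
    simpa using Functor.congr_hom hfun f
  have hlam : ∀ X : C, lam X = adj.unit.app _ ≫ K.map
      (eqToHom (hobj (K.obj (U.obj X))) ≫ T''.toFunctor.map (adj.counit.app (U.obj X)) ≫
        eqToHom (hobj X).symm) := by
    intro X
    simp [lam, Adjunction.homEquiv_apply, Adjunction.homEquiv_symm_apply]
  have hnat : ∀ {A B : C} (g : A ⟶ B), g ≫ adj.unit.app B = adj.unit.app A ≫ K.map (U.map g) :=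
    fun g => by simpa using (adj.unit.naturality g).symm
  have cnat : ∀ {A B : D} (g : A ⟶ B), U.map (K.map g) ≫ adj.counit.app B =
      adj.counit.app A ≫ g := fun g => by simpa using adj.counit.naturality g
  have hflat : ∀ X : C, U.map (lam X) ≫ adj.counit.app (U.obj (T'.toFunctor.obj X)) =
      eqToHom (hobj (K.obj (U.obj X))) ≫ T''.toFunctor.map (adj.counit.app (U.obj X)) ≫
        eqToHom (hobj X).symm := by
    intro X
    rw [hlam, U.map_comp, Category.assoc, cnat, ← Category.assoc,
      adj.left_triangle_components, Category.id_comp]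
  have cnat' : ∀ {A B : D} (g : A ⟶ B) {Z : D} (h : B ⟶ Z),
      U.map (K.map g) ≫ adj.counit.app B ≫ h = adj.counit.app A ≫ g ≫ h := by
    intro A B g Z h
    rw [← Category.assoc, cnat, Category.assoc]
  have hflat' : ∀ (X : C) {Z : D} (h : U.obj (T'.toFunctor.obj X) ⟶ Z),
      U.map (lam X) ≫ adj.counit.app (U.obj (T'.toFunctor.obj X)) ≫ h =
      eqToHom (hobj (K.obj (U.obj X))) ≫ T''.toFunctor.map (adj.counit.app (U.obj X)) ≫
        eqToHom (hobj X).symm ≫ h := by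
    intro X Z h
    rw [← Category.assoc, hflat, Category.assoc, Category.assoc]
  refine ⟨?_, ?_, ?_, ?_, ?_⟩
  · intro X Y f
    simp only [hlam]
    simp only [← Category.assoc, hnat]
    simp only [Category.assoc, ← K.map_comp]
    simp only [Functor.comp_obj, Functor.id_obj]
    congr 2
    rw [hU]
    simp only [Category.assoc, eqToHom_trans_assoc, eqToHom_refl, Category.id_comp]
    rw [← T''.toFunctor.map_comp_assoc, cnat, T''.toFunctor.map_comp]
    rw [hU]
    simp
  · intro X
    apply (adj.homEquiv _ _).symm.injective
    simp only [Adjunction.homEquiv_symm_apply, U.map_comp, Category.assoc]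
    rw [hflat, hU]
    simp only [Category.assoc, eqToHom_trans_assoc, eqToHom_refl, Category.id_comp]
    rw [← T''.toFunctor.map_comp_assoc]
    erw [adj.left_triangle_components,
      adj.left_triangle_components]
    simp
  · intro X
    apply (adj.homEquiv _ _).symm.injective
    simp only [Adjunction.homEquiv_symm_apply, U.map_comp, Category.assoc,
      Functor.id_obj, Functor.comp_obj, cnat]
    rw [cnat']
    rw [hflat, hflat' (K.obj (U.obj X))]
    rw [hU]
    simp only [Category.assoc, eqToHom_trans_assoc, eqToHom_refl, Category.id_comp]
    rw [← T''.toFunctor.map_comp_assoc, cnat]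
    rw [T''.toFunctor.map_comp, Category.assoc]
  · intro X
    simp only [hlam]
    simp only [← Category.assoc, hnat]
    simp only [Category.assoc, ← K.map_comp, hη]
    simp only [Category.assoc, eqToHom_trans_assoc, eqToHom_refl, Category.id_comp,
      Functor.comp_obj, Functor.id_obj]
    rw [← Category.assoc (T''.η.app _), ← T''.η.naturality, Functor.id_map]
    simp only [Category.assoc, K.map_comp]
    rw [← Category.assoc]
    erw [adj.right_triangle_components]
    simp [hη]
  · intro X
    conv_lhs => rw [hlam]
    conv_rhs => rw [hlam (T'.toFunctor.obj X)]
    simp only [← Category.assoc, hnat]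
    simp only [Category.assoc, ← K.map_comp]
    simp only [Functor.comp_obj, Functor.id_obj]
    congr 2
    rw [hμ, hU]
    simp only [Category.assoc, eqToHom_trans_assoc, eqToHom_refl, Category.id_comp]
    rw [← T''.toFunctor.map_comp_assoc, hflat]
    rw [← T''.μ.naturality_assoc]
    rw [hμ]
    simp [eqToHom_map, ← T''.toFunctor.map_comp_assoc, eqToHom_trans_assoc, Functor.comp_map]
end

section
/- Let U ⊣ K be an adjunction with counit ε, and let T be a monad on the domain of U such that U commutes with T as in the lifting situation, with induced distributive laws φ : L(KU) ⇒ (KU)L and ψ : P(KU) ⇒ (KU)P, and a distributive law λ : LP ⇒ PL of the monad L over the monad P. If the Yang–Baxter equation holds, i.e., (KU)λ ∘ φP ∘ Lψ = ψL ∘ Pφ ∘ λ(KU) as natural transformations LP(KU) ⇒ (KU)PL, then the composite δ := (KU)λ ∘ φ_P : L(KU P) ⇒ (KU P)L is a distributive law of the monad L over the composite monad KU∘P. -/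
open CategoryTheory

universe v₁ v₂ u₁ u₂

/-- an instance of Cheng's iterated distributive laws: given monads `L`, `P`
on `C`, the monad `KU` induced by an adjunction `U ⊣ K`, distributive laws
`φ : L(KU) ⇒ (KU)L`, `ψ : P(KU) ⇒ (KU)P` and `λ : LP ⇒ PL` of monads satisfying the
Yang–Baxter equation, the composite `δ := (KU)λ ∘ φP : L(KU∘P) ⇒ (KU∘P)L` is a distributive
law of the monad `L` over the composite monad `KU∘P`. -/
theorem stmt8 {C : Type u₁} [Category.{v₁} C] {D : Type u₂} [Category.{v₂} D]
    (U : C ⥤ D) (K : D ⥤ C) (adj : U ⊣ K)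
    (L P : CategoryTheory.Monad C)
    (φ : (U ⋙ K) ⋙ L.toFunctor ⟶ L.toFunctor ⋙ (U ⋙ K))
    (ψ : (U ⋙ K) ⋙ P.toFunctor ⟶ P.toFunctor ⋙ (U ⋙ K))
    (lam : P.toFunctor ⋙ L.toFunctor ⟶ L.toFunctor ⋙ P.toFunctor)
    -- φ is a distributive law of the monad L over the monad KU
    (hφ1 : ∀ X : C, L.toFunctor.map (adj.unit.app X) ≫ φ.app X = adj.unit.app (L.toFunctor.obj X))
    (hφ2 : ∀ X : C, L.toFunctor.map (K.map (adj.counit.app (U.obj X))) ≫ φ.app X =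
      φ.app (K.obj (U.obj X)) ≫ K.map (U.map (φ.app X)) ≫
        K.map (adj.counit.app (U.obj (L.toFunctor.obj X))))
    (hφ3 : ∀ X : C, L.η.app (K.obj (U.obj X)) ≫ φ.app X = K.map (U.map (L.η.app X)))
    (hφ4 : ∀ X : C, L.μ.app (K.obj (U.obj X)) ≫ φ.app X =
      L.toFunctor.map (φ.app X) ≫ φ.app (L.toFunctor.obj X) ≫ K.map (U.map (L.μ.app X)))
    -- ψ is a distributive law of the monad P over the monad KU
    (hψ1 : ∀ X : C, P.toFunctor.map (adj.unit.app X) ≫ ψ.app X = adj.unit.app (P.toFunctor.obj X))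
    (hψ2 : ∀ X : C, P.toFunctor.map (K.map (adj.counit.app (U.obj X))) ≫ ψ.app X =
      ψ.app (K.obj (U.obj X)) ≫ K.map (U.map (ψ.app X)) ≫
        K.map (adj.counit.app (U.obj (P.toFunctor.obj X))))
    (hψ3 : ∀ X : C, P.η.app (K.obj (U.obj X)) ≫ ψ.app X = K.map (U.map (P.η.app X)))
    (hψ4 : ∀ X : C, P.μ.app (K.obj (U.obj X)) ≫ ψ.app X =
      P.toFunctor.map (ψ.app X) ≫ ψ.app (P.toFunctor.obj X) ≫ K.map (U.map (P.μ.app X)))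
    -- λ is a distributive law of the monad L over the monad P
    (hlam1 : ∀ X : C, L.toFunctor.map (P.η.app X) ≫ lam.app X = P.η.app (L.toFunctor.obj X))
    (hlam2 : ∀ X : C, L.toFunctor.map (P.μ.app X) ≫ lam.app X =
      lam.app (P.toFunctor.obj X) ≫ P.toFunctor.map (lam.app X) ≫ P.μ.app (L.toFunctor.obj X))
    (hlam3 : ∀ X : C, L.η.app (P.toFunctor.obj X) ≫ lam.app X = P.toFunctor.map (L.η.app X))
    (hlam4 : ∀ X : C, L.μ.app (P.toFunctor.obj X) ≫ lam.app X =
      L.toFunctor.map (lam.app X) ≫ lam.app (L.toFunctor.obj X) ≫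
        P.toFunctor.map (L.μ.app X))
    -- the Yang–Baxter equation
    (hYB : ∀ X : C, L.toFunctor.map (ψ.app X) ≫ φ.app (P.toFunctor.obj X) ≫
        K.map (U.map (lam.app X)) =
      lam.app (K.obj (U.obj X)) ≫ P.toFunctor.map (φ.app X) ≫ ψ.app (L.toFunctor.obj X)) :
    -- then δ := (KU)λ ∘ φP is a distributive law of the monad L over the composite monad KU∘P
    let δ : ∀ X : C, L.toFunctor.obj (K.obj (U.obj (P.toFunctor.obj X))) ⟶
        K.obj (U.obj (P.toFunctor.obj (L.toFunctor.obj X))) :=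
      fun X => φ.app (P.toFunctor.obj X) ≫ K.map (U.map (lam.app X))
    let μMP : ∀ Z : C, K.obj (U.obj (P.toFunctor.obj (K.obj (U.obj (P.toFunctor.obj Z))))) ⟶
        K.obj (U.obj (P.toFunctor.obj Z)) :=
      fun Z => K.map (U.map (ψ.app (P.toFunctor.obj Z))) ≫
        K.map (adj.counit.app (U.obj (P.toFunctor.obj (P.toFunctor.obj Z)))) ≫
        K.map (U.map (P.μ.app Z))
    -- δ is natural
    (∀ (X Y : C) (f : X ⟶ Y),
      L.toFunctor.map (K.map (U.map (P.toFunctor.map f))) ≫ δ Y =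
        δ X ≫ K.map (U.map (P.toFunctor.map (L.toFunctor.map f)))) ∧
    -- δ is compatible with the unit of KU∘P
    (∀ X : C, L.toFunctor.map (P.η.app X ≫ adj.unit.app (P.toFunctor.obj X)) ≫ δ X =
      P.η.app (L.toFunctor.obj X) ≫ adj.unit.app (P.toFunctor.obj (L.toFunctor.obj X))) ∧
    -- δ is compatible with the multiplication of KU∘P
    (∀ X : C, L.toFunctor.map (μMP X) ≫ δ X =
      δ (K.obj (U.obj (P.toFunctor.obj X))) ≫ K.map (U.map (P.toFunctor.map (δ X))) ≫
        μMP (L.toFunctor.obj X)) ∧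
    -- δ is compatible with the unit of L
    (∀ X : C, L.η.app (K.obj (U.obj (P.toFunctor.obj X))) ≫ δ X =
      K.map (U.map (P.toFunctor.map (L.η.app X)))) ∧
    -- δ is compatible with the multiplication of L
    (∀ X : C, L.μ.app (K.obj (U.obj (P.toFunctor.obj X))) ≫ δ X =
      L.toFunctor.map (δ X) ≫ δ (L.toFunctor.obj X) ≫
        K.map (U.map (P.toFunctor.map (L.μ.app X)))) := by

  intro δ μMP
  have natφ : ∀ {X Y : C} (f : X ⟶ Y),
      L.toFunctor.map (K.map (U.map f)) ≫ φ.app Y =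
        φ.app X ≫ K.map (U.map (L.toFunctor.map f)) := by
    intro X Y f; simpa using φ.naturality f
  have natψ : ∀ {X Y : C} (f : X ⟶ Y),
      P.toFunctor.map (K.map (U.map f)) ≫ ψ.app Y =
        ψ.app X ≫ K.map (U.map (P.toFunctor.map f)) := by
    intro X Y f; simpa using ψ.naturality f
  have natlam : ∀ {X Y : C} (f : X ⟶ Y),
      L.toFunctor.map (P.toFunctor.map f) ≫ lam.app Y =
        lam.app X ≫ P.toFunctor.map (L.toFunctor.map f) := by
    intro X Y f; simpa using lam.naturality f
  have natε : ∀ {X Y : C} (f : X ⟶ Y),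
      K.map (adj.counit.app (U.obj X)) ≫ K.map (U.map f) =
        K.map (U.map (K.map (U.map f))) ≫ K.map (adj.counit.app (U.obj Y)) := by
    intro X Y f
    rw [← K.map_comp, ← K.map_comp]
    exact congrArg K.map (adj.counit.naturality (U.map f)).symm
  have natη : ∀ {X Y : C} (f : X ⟶ Y),
      f ≫ adj.unit.app Y = adj.unit.app X ≫ K.map (U.map f) := by
    intro X Y f; simpa using adj.unit.naturality f
  refine ⟨?_, ?_, ?_, ?_, ?_⟩
  · -- naturality of δ
    intro X Y f
    show L.toFunctor.map (K.map (U.map (P.toFunctor.map f))) ≫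
        φ.app (P.toFunctor.obj Y) ≫ K.map (U.map (lam.app Y)) = _
    rw [← Category.assoc, natφ (P.toFunctor.map f), Category.assoc,
      ← K.map_comp, ← U.map_comp, natlam f, U.map_comp, K.map_comp, Category.assoc]
  · -- unit of KU∘P
    intro X
    show L.toFunctor.map (P.η.app X ≫ adj.unit.app (P.toFunctor.obj X)) ≫
        φ.app (P.toFunctor.obj X) ≫ K.map (U.map (lam.app X)) = _
    rw [Functor.map_comp, Category.assoc,
      ← Category.assoc (L.toFunctor.map (adj.unit.app (P.toFunctor.obj X))),
      hφ1 (P.toFunctor.obj X)]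
    have hη := natη (lam.app X)
    simp only [Functor.comp_obj] at hη
    rw [← hη, ← Category.assoc, hlam1 X]
  · -- multiplication of KU∘P
    intro X
    show L.toFunctor.map (K.map (U.map (ψ.app (P.toFunctor.obj X))) ≫
          K.map (adj.counit.app (U.obj (P.toFunctor.obj (P.toFunctor.obj X)))) ≫
          K.map (U.map (P.μ.app X))) ≫
        φ.app (P.toFunctor.obj X) ≫ K.map (U.map (lam.app X)) =
      (φ.app (P.toFunctor.obj (K.obj (U.obj (P.toFunctor.obj X)))) ≫
        K.map (U.map (lam.app (K.obj (U.obj (P.toFunctor.obj X)))))) ≫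
      K.map (U.map (P.toFunctor.map (φ.app (P.toFunctor.obj X) ≫
        K.map (U.map (lam.app X))))) ≫
      K.map (U.map (ψ.app (P.toFunctor.obj (L.toFunctor.obj X)))) ≫
      K.map (adj.counit.app (U.obj (P.toFunctor.obj (P.toFunctor.obj (L.toFunctor.obj X))))) ≫
      K.map (U.map (P.μ.app (L.toFunctor.obj X)))
    simp only [Functor.map_comp, Category.assoc]
    have hμ := natφ (P.μ.app X)
    simp only [Functor.comp_obj] at hμ
    slice_lhs 3 4 => rw [hμ]
    try simp only [Functor.comp_obj, Category.assoc]
    rw [← K.map_comp, ← U.map_comp, hlam2 X, U.map_comp, U.map_comp, K.map_comp, K.map_comp]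
    try simp only [Category.assoc]
    slice_lhs 2 3 => rw [hφ2 (P.toFunctor.obj (P.toFunctor.obj X))]
    try simp only [Category.assoc]
    have hε1 := natε (lam.app (P.toFunctor.obj X))
    simp only [Functor.comp_obj] at hε1
    slice_lhs 4 5 => rw [hε1]
    try simp only [Category.assoc]
    have hψn := natφ (ψ.app (P.toFunctor.obj X))
    simp only [Functor.comp_obj] at hψn
    slice_lhs 1 2 => rw [hψn]
    try simp only [Functor.comp_obj, Category.assoc]
    rw [← Category.assoc (K.map (U.map (L.toFunctor.map (ψ.app _)))), ← K.map_comp,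
      ← U.map_comp, ← Category.assoc (K.map (U.map (L.toFunctor.map (ψ.app _) ≫ φ.app _))),
      ← K.map_comp, ← U.map_comp, Category.assoc (L.toFunctor.map (ψ.app _)),
      hYB (P.toFunctor.obj X)]
    simp only [Functor.comp_obj, Functor.map_comp, Category.assoc]
    congr 3
    have hε2 := natε (P.toFunctor.map (lam.app X))
    simp only [Functor.comp_obj] at hε2
    slice_lhs 2 3 => rw [hε2]
    try simp only [Category.assoc]
    rw [← Category.assoc, ← K.map_comp, ← U.map_comp]
    have hψl := natψ (lam.app X)
    simp only [Functor.comp_obj] at hψl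
    rw [← hψl, U.map_comp, K.map_comp]
    try simp only [Category.assoc]
  · -- unit of L
    intro X
    show L.η.app (K.obj (U.obj (P.toFunctor.obj X))) ≫
        φ.app (P.toFunctor.obj X) ≫ K.map (U.map (lam.app X)) = _
    rw [← Category.assoc, hφ3 (P.toFunctor.obj X), ← K.map_comp, ← U.map_comp, hlam3 X]
  · -- multiplication of L
    intro X
    show L.μ.app (K.obj (U.obj (P.toFunctor.obj X))) ≫
        φ.app (P.toFunctor.obj X) ≫ K.map (U.map (lam.app X)) =
      L.toFunctor.map (φ.app (P.toFunctor.obj X) ≫ K.map (U.map (lam.app X))) ≫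
      (φ.app (P.toFunctor.obj (L.toFunctor.obj X)) ≫
        K.map (U.map (lam.app (L.toFunctor.obj X)))) ≫
      K.map (U.map (P.toFunctor.map (L.μ.app X)))
    rw [← Category.assoc, hφ4 (P.toFunctor.obj X)]
    try simp only [Category.assoc]
    rw [← K.map_comp, ← U.map_comp, hlam4 X, U.map_comp, U.map_comp, K.map_comp, K.map_comp]
    have h := natφ (lam.app X)
    simp only [Functor.comp_obj] at h
    rw [← Category.assoc (φ.app (L.toFunctor.obj (P.toFunctor.obj X))), ← h]
    simp only [Functor.map_comp, Category.assoc]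
end

section
/- Let B be an endofunctor on Set such that for every set Z the cofree B-coalgebra on Z exists (the final Z × B(·)-coalgebra). Let L be the list monad, λ : LB ⇒ BL a distributive law of the monad L over the functor B, and p : At → B(L(At)) a function with induced λ-bialgebra (L(At), ++, p*) where p* = B(++) ∘ λ_{L At} ∘ L(p). Let (Ω, c) be the final L(At) × B(·)-coalgebra, equipped with the L-algebra ⧺ : L(Ω) → Ω obtained by finality from the coalgebra (id × B(⧺)) ∘ λ' ∘ L(c), where λ' is the induced distributive law of L over L(At) × B(·). Then the unique coalgebra morphism ⟦·⟧ : L(At) → Ω from (L(At), ⟨id, p*⟩) to (Ω, c) is also an L-algebra morphism; consequently, for all lists l_1, …, l_k of atoms, ⟦l_1 ++ … ++ l_k⟧ = ⟦l_1⟧ ⧺ … ⧺ ⟦l_k⟧. -/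
open CategoryTheory

universe u

/-- given a behaviour functor `B` on `Set` with cofree coalgebras, a
distributive law `λ : LB ⇒ BL` of the list monad over `B`, and a program
`p : At → B(L(At))` with induced λ-bialgebra `(L(At), ++, p*)`, the unique coalgebra
morphism `⟦·⟧ : L(At) → Ω` into the final `L(At) × B(·)`-coalgebra (equipped with the
`L`-algebra `⧺` obtained by finality) is an `L`-algebra morphism; consequently
`⟦l₁ ++ … ++ l_k⟧ = ⟦l₁⟧ ⧺ … ⧺ ⟦l_k⟧`. -/
theorem stmt14 (At : Type u) (B : Type u ⥤ Type u)
    (lamB : ∀ X : Type u, List (B.obj X) → B.obj (List X))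
    (hnat : ∀ (X Y : Type u) (f : X → Y) (l : List (B.obj X)),
      lamB Y (l.map (B.map (TypeCat.ofHom f))) = B.map (TypeCat.ofHom (List.map f)) (lamB X l))
    (hunit : ∀ (X : Type u) (b : B.obj X), lamB X [b] = B.map (TypeCat.ofHom (fun x : X => [x])) b)
    (hmult : ∀ (X : Type u) (ll : List (List (B.obj X))),
      lamB X ll.flatten = B.map (TypeCat.ofHom (List.flatten (α := X))) (lamB (List X) (ll.map (lamB X))))
    -- the cofree B-coalgebra on Z exists for every Z
    (hcofree : ∀ Z : Type u, ∃ (W : Type u) (d : W → Z × B.obj W),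
      ∀ (Y : Type u) (q : Y → Z × B.obj Y), ∃! f : Y → W,
        ∀ y, d (f y) = ((q y).1, B.map (TypeCat.ofHom f) (q y).2))
    (p : At → B.obj (List At))
    -- (Ω, c) is the final L(At) × B(·)-coalgebra
    (Ω : Type u) (c : Ω → List At × B.obj Ω)
    (hfinal : ∀ (Y : Type u) (q : Y → List At × B.obj Y), ∃! f : Y → Ω,
      ∀ y, c (f y) = ((q y).1, B.map (TypeCat.ofHom f) (q y).2))
    -- ⧺ is the L-algebra obtained by finality from (id × B(⧺)) ∘ λ' ∘ L(c)
    (conc : List Ω → Ω)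
    (hconc : ∀ ws : List Ω,
      c (conc ws) = ((ws.map (fun w => (c w).1)).flatten,
        B.map (TypeCat.ofHom conc) (lamB Ω (ws.map (fun w => (c w).2)))))
    -- ⟦·⟧ is the unique coalgebra morphism from (L(At), ⟨id, p*⟩), where
    -- p* = B(++) ∘ λ_{L At} ∘ L(p)
    (sem : List At → Ω)
    (hsem : ∀ l : List At,
      c (sem l) = (l, B.map (TypeCat.ofHom sem) (B.map (TypeCat.ofHom (List.flatten (α := At))) (lamB (List At) (l.map p))))) :
    ∀ ls : List (List At), sem ls.flatten = conc (ls.map sem) := by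
  -- the intermediate step on single lists
  set s : List At → B.obj (List At) :=
    fun l => B.map (TypeCat.ofHom (List.flatten (α := At))) (lamB (List At) (l.map p)) with hs
  -- coalgebra structure on List (List At)
  set q : List (List At) → List At × B.obj (List (List At)) :=
    fun ls => (ls.flatten, lamB (List At) (ls.map s)) with hq
  obtain ⟨f, hf, huniq⟩ := hfinal (List (List At)) q
  have key : ∀ (g : List (List At) → Ω),
      (∀ ls, c (g ls) = ((q ls).1, B.map (TypeCat.ofHom g) (q ls).2)) → g = f := fun g hg => huniq g hg
  have h1 : (fun ls : List (List At) => sem ls.flatten) = f := by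
    apply key
    intro ls
    rw [hsem]
    refine Prod.ext rfl ?_
    simp only [hq]
    have e1 : lamB (List At) (ls.flatten.map p)
        = B.map (TypeCat.ofHom (List.flatten (α := List At))) (lamB (List (List At)) (ls.map (fun l => lamB (List At) (l.map p)))) := by
      have := hmult (List At) (ls.map (fun l => l.map p))
      have e0 : (ls.map (fun l => l.map p)).flatten = ls.flatten.map p := by
        simp [List.map_flatten]
      rw [e0] at this
      simpa [List.map_map, Function.comp_def] using this
    have e2 : lamB (List At) (ls.map s)
        = B.map (TypeCat.ofHom (List.map (List.flatten (α := At))))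
            (lamB (List (List At)) (ls.map (fun l => lamB (List At) (l.map p)))) := by
      have := hnat (List (List At)) (List At) List.flatten
        (ls.map (fun l => lamB (List At) (l.map p)))
      simpa [List.map_map, Function.comp_def, hs] using this
    rw [e1, e2]
    rw [← FunctorToTypes.map_comp_apply, ← FunctorToTypes.map_comp_apply,
        ← FunctorToTypes.map_comp_apply]
    exact congrFun (congrArg (fun h => (B.map h : _ → _)) (by
      ext lll
      simp [types_comp, Function.comp, List.flatten_flatten])) _
  have h2 : (fun ls : List (List At) => conc (ls.map sem)) = f := by
    apply key
    intro ls
    rw [hconc]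
    refine Prod.ext ?_ ?_
    · simp [Function.comp_def, hsem, hq]
    · simp only [hq]
      have e3 : (ls.map sem).map (fun w => (c w).2) = (ls.map s).map (B.map (TypeCat.ofHom sem)) := by
        simp [List.map_map, Function.comp, hsem, hs]
      rw [e3, hnat, ← FunctorToTypes.map_comp_apply]
      rfl
  intro ls
  have := congrFun h1 ls
  rw [this, ← congrFun h2 ls]
end
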